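/- Define A_t = Ω_t D Ω_t^T where D = diag(−1, 3) and Ω_t is the 2×2 rotation matrix of angle t. Then the solution R_t of ∂_t R_t = −A_t R_t, R_0 = I_2, is given by R_t = Ω_t exp(t M) with M = [[1,1],[−1,−3]], and ‖R_t‖ does not converge to 0 as t → ∞ (indeed sup_t ‖R_t‖ = ∞), even though (1/t)∫_0^t A_s ds → I_2 as t → ∞. -/

import Mathlib

open MeasureTheory Real Filter

/-- The operator norm of a matrix with respect to the Euclidean norm. -/
noncomputable def opNorm {d : ℕ} (A : Matrix (Fin d) (Fin d) ℝ) : ℝ :=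
  ‖LinearMap.toContinuousLinearMap (Matrix.toEuclideanLin A)‖

/-- The rotation matrix of angle `t`. -/
noncomputable def Omg (t : ℝ) : Matrix (Fin 2) (Fin 2) ℝ :=
  !![Real.cos t, -Real.sin t; Real.sin t, Real.cos t]

/-- `A_t = Ω_t D Ω_tᵀ` with `D = diag(-1, 3)`. -/
noncomputable def Amat (t : ℝ) : Matrix (Fin 2) (Fin 2) ℝ :=
  Omg t * !![(-1 : ℝ), 0; 0, 3] * (Omg t).transpose

/-- The matrix `M = [[1,1],[-1,-3]]`. -/
def Mmat : Matrix (Fin 2) (Fin 2) ℝ := !![(1 : ℝ), 1; -1, -3]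

/-- The claimed solution `R_t = Ω_t exp (t M)`. -/
noncomputable def Rmat (t : ℝ) : Matrix (Fin 2) (Fin 2) ℝ :=
  Omg t * NormedSpace.exp (t • Mmat)

noncomputable def Pmat : Matrix (Fin 2) (Fin 2) ℝ :=
  !![1, 1; Real.sqrt 3 - 2, -Real.sqrt 3 - 2]

noncomputable def Pinv : Matrix (Fin 2) (Fin 2) ℝ :=
  (1 / (2 * Real.sqrt 3)) • !![Real.sqrt 3 + 2, 1; Real.sqrt 3 - 2, -1]

lemma sqrt3_sq : Real.sqrt 3 * Real.sqrt 3 = 3 :=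
  Real.mul_self_sqrt (by norm_num)

lemma sqrt3_pos : (0:ℝ) < Real.sqrt 3 := Real.sqrt_pos.mpr (by norm_num)

lemma P_mul_Pinv : Pmat * Pinv = 1 := by
  have h := sqrt3_sq
  have h0 := sqrt3_pos.ne'
  ext i j
  fin_cases i <;> fin_cases j <;>
    simp [Pmat, Pinv, Matrix.mul_apply, Fin.sum_univ_two, Matrix.one_apply] <;>
    field_simp <;> nlinarith [h]

lemma P_inv_eq : Pmat⁻¹ = Pinv := Matrix.inv_eq_right_inv P_mul_Pinv

lemma P_isUnit : IsUnit Pmat := by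
  have : IsUnit Pmat.det := by
    rw [isUnit_iff_ne_zero]
    simp [Pmat, Matrix.det_fin_two_of]
    nlinarith [sqrt3_pos]
  exact (Matrix.isUnit_iff_isUnit_det _).mpr this

lemma diag2 (x y : ℝ) : Matrix.diagonal ![x, y] = !![x, 0; 0, y] := by
  ext i j
  fin_cases i <;> fin_cases j <;> simp [Matrix.diagonal]

noncomputable def expE (t : ℝ) : Matrix (Fin 2) (Fin 2) ℝ :=
  Pmat * Matrix.diagonal ![Real.exp (t * (Real.sqrt 3 - 1)), Real.exp (t * (-Real.sqrt 3 - 1))] * Pinv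

lemma expM_eq (t : ℝ) : NormedSpace.exp (t • Mmat) = expE t := by
  have key : t • Mmat = Pmat * Matrix.diagonal ![t * (Real.sqrt 3 - 1), t * (-Real.sqrt 3 - 1)] * Pmat⁻¹ := by
    rw [P_inv_eq, diag2]
    have h := sqrt3_sq
    have h0 := sqrt3_pos.ne'
    ext i j
    fin_cases i <;> fin_cases j <;>
      simp [Pmat, Pinv, Mmat, Matrix.mul_apply, Fin.sum_univ_two] <;>
      field_simp <;>
      first
        | linear_combination (0 * h)
        | linear_combination (2 * t * Real.sqrt 3) * h
        | linear_combination (-2 * t * Real.sqrt 3) * h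
        | linear_combination (4 * t * Real.sqrt 3) * h
        | linear_combination (-4 * t * Real.sqrt 3) * h
  have hdiag : NormedSpace.exp (![t * (Real.sqrt 3 - 1), t * (-Real.sqrt 3 - 1)] : Fin 2 → ℝ)
      = ![Real.exp (t * (Real.sqrt 3 - 1)), Real.exp (t * (-Real.sqrt 3 - 1))] := by
    funext i
    rw [Pi.exp_def]
    fin_cases i <;> simp <;> rw [← Real.exp_eq_exp_ℝ]
  rw [key, Matrix.exp_conj Pmat _ P_isUnit, Matrix.exp_diagonal, P_inv_eq, expE, hdiag]

def E11 : Matrix (Fin 2) (Fin 2) ℝ := !![1, 0; 0, 0]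
def E22 : Matrix (Fin 2) (Fin 2) ℝ := !![0, 0; 0, 1]

noncomputable def Cmat1 : Matrix (Fin 2) (Fin 2) ℝ := Pmat * E11 * Pinv
noncomputable def Cmat2 : Matrix (Fin 2) (Fin 2) ℝ := Pmat * E22 * Pinv

noncomputable def DD : Matrix (Fin 2) (Fin 2) ℝ :=
  !![Real.sqrt 3 - 1, 0; 0, -Real.sqrt 3 - 1]

lemma expE_eq (t : ℝ) :
    expE t = Real.exp (t * (Real.sqrt 3 - 1)) • Cmat1
      + Real.exp (t * (-Real.sqrt 3 - 1)) • Cmat2 := by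
  unfold expE Cmat1 Cmat2 E11 E22
  rw [diag2]
  ext i j
  fin_cases i <;> fin_cases j <;>
    simp [Matrix.mul_apply, Fin.sum_univ_two, Pmat, Pinv] <;> ring

lemma hMP : Mmat * Pmat = Pmat * DD := by
  have h := sqrt3_sq
  ext i j
  fin_cases i <;> fin_cases j <;>
    simp [Mmat, Pmat, DD, Matrix.mul_apply, Fin.sum_univ_two] <;>
    first
      | linear_combination (0 * h)
      | linear_combination h
      | linear_combination -h

lemma DE1 : DD * E11 = (Real.sqrt 3 - 1) • E11 := by
  ext i j
  fin_cases i <;> fin_cases j <;> simp [DD, E11, Matrix.mul_apply, Fin.sum_univ_two]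

lemma DE2 : DD * E22 = (-Real.sqrt 3 - 1) • E22 := by
  ext i j
  fin_cases i <;> fin_cases j <;> simp [DD, E22, Matrix.mul_apply, Fin.sum_univ_two]

lemma MC1 : Mmat * Cmat1 = (Real.sqrt 3 - 1) • Cmat1 := by
  unfold Cmat1
  rw [← mul_assoc, ← mul_assoc, hMP, mul_assoc Pmat DD E11, DE1, mul_smul_comm,
    Matrix.smul_mul, mul_assoc]

lemma MC2 : Mmat * Cmat2 = (-Real.sqrt 3 - 1) • Cmat2 := by
  unfold Cmat2
  rw [← mul_assoc, ← mul_assoc, hMP, mul_assoc Pmat DD E22, DE2, mul_smul_comm,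
    Matrix.smul_mul, mul_assoc]

lemma expE_deriv (t : ℝ) (k j : Fin 2) :
    HasDerivAt (fun u => expE u k j) ((Mmat * expE t) k j) t := by
  have hfun : (fun u => expE u k j)
      = fun u => Real.exp (u * (Real.sqrt 3 - 1)) * Cmat1 k j
        + Real.exp (u * (-Real.sqrt 3 - 1)) * Cmat2 k j := by
    funext u
    rw [expE_eq]
    simp [Matrix.add_apply, Matrix.smul_apply, smul_eq_mul]
  have h1 : HasDerivAt (fun u : ℝ => Real.exp (u * (Real.sqrt 3 - 1)))
      ((Real.sqrt 3 - 1) * Real.exp (t * (Real.sqrt 3 - 1))) t := by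
    simpa [mul_comm] using (((hasDerivAt_id t).mul_const (Real.sqrt 3 - 1)).exp)
  have h2 : HasDerivAt (fun u : ℝ => Real.exp (u * (-Real.sqrt 3 - 1)))
      ((-Real.sqrt 3 - 1) * Real.exp (t * (-Real.sqrt 3 - 1))) t := by
    simpa [mul_comm] using (((hasDerivAt_id t).mul_const (-Real.sqrt 3 - 1)).exp)
  rw [hfun]
  have := (h1.mul_const (Cmat1 k j)).add (h2.mul_const (Cmat2 k j))
  refine this.congr_deriv ?_
  rw [expE_eq, mul_add, mul_smul_comm, mul_smul_comm, MC1, MC2]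
  simp [Matrix.add_apply, Matrix.smul_apply, smul_eq_mul]
  ring

def Jmat : Matrix (Fin 2) (Fin 2) ℝ := !![0, -1; 1, 0]

lemma Omg_deriv (t : ℝ) (i k : Fin 2) :
    HasDerivAt (fun u => Omg u i k) ((Omg t * Jmat) i k) t := by
  fin_cases i <;> fin_cases k <;>
    simp [Omg, Jmat, Matrix.mul_apply, Fin.sum_univ_two]
  · exact (Real.hasDerivAt_cos t)
  · exact (Real.hasDerivAt_sin t).neg
  · exact (Real.hasDerivAt_sin t)
  · exact (Real.hasDerivAt_cos t)

lemma Omg_transpose (t : ℝ) :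
    (Omg t).transpose = !![Real.cos t, Real.sin t; -Real.sin t, Real.cos t] := by
  ext i j
  fin_cases i <;> fin_cases j <;> simp [Omg]

lemma Amat_eq (t : ℝ) : Amat t = !![1 - 2 * Real.cos (2*t), -2 * Real.sin (2*t);
    -2 * Real.sin (2*t), 1 + 2 * Real.cos (2*t)] := by
  unfold Amat
  rw [Omg_transpose]
  ext i j
  fin_cases i <;> fin_cases j <;>
    simp [Omg, Matrix.mul_apply, Fin.sum_univ_two, Real.cos_two_mul, Real.sin_two_mul] <;>
    nlinarith [Real.sin_sq_add_cos_sq t]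

lemma key0 (t : ℝ) : Omg t * Jmat + Omg t * Mmat = -(Amat t * Omg t) := by
  have h := Real.sin_sq_add_cos_sq t
  rw [Amat_eq]
  ext i j
  fin_cases i <;> fin_cases j <;>
    simp [Omg, Jmat, Mmat, Matrix.mul_apply,
      Fin.sum_univ_two, Matrix.add_apply, Matrix.neg_apply,
      Real.cos_two_mul, Real.sin_two_mul] <;>
    first
      | linear_combination (0 * h)
      | linear_combination (4 * Real.cos t) * h
      | linear_combination (-4 * Real.cos t) * h
      | linear_combination (4 * Real.sin t) * h
      | linear_combination (-4 * Real.sin t) * h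
      | linear_combination (2 * Real.cos t) * h
      | linear_combination (-2 * Real.cos t) * h
      | linear_combination (2 * Real.sin t) * h
      | linear_combination (-2 * Real.sin t) * h

lemma Rmat_deriv (t : ℝ) (i j : Fin 2) :
    HasDerivAt (fun u => Rmat u i j) ((-(Amat t * Rmat t)) i j) t := by
  have hfun : (fun u => Rmat u i j) = fun u => ∑ k, Omg u i k * expE u k j := by
    funext u
    rw [Rmat, expM_eq, Matrix.mul_apply]
  rw [hfun]
  have hder : HasDerivAt (fun u => ∑ k, Omg u i k * expE u k j)
      (∑ k, ((Omg t * Jmat) i k * expE t k j + Omg t i k * (Mmat * expE t) k j)) t :=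
    HasDerivAt.fun_sum fun k _ => (Omg_deriv t i k).mul (expE_deriv t k j)
  convert hder using 1
  have hmat : (Omg t * Jmat) * expE t + Omg t * (Mmat * expE t)
      = -(Amat t * Rmat t) := by
    rw [Rmat, expM_eq, ← mul_assoc (Omg t) Mmat (expE t), ← add_mul, key0, ← mul_assoc,
      neg_mul]
  calc (-(Amat t * Rmat t)) i j
      = ((Omg t * Jmat) * expE t + Omg t * (Mmat * expE t)) i j := by rw [hmat]
    _ = ∑ k, ((Omg t * Jmat) i k * expE t k j + Omg t i k * (Mmat * expE t) k j) := by
        simp [Matrix.add_apply, Matrix.mul_apply, Finset.sum_add_distrib]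

lemma Rmat_zero : Rmat 0 = 1 := by
  rw [Rmat, zero_smul, NormedSpace.exp_zero, mul_one]
  ext i j
  fin_cases i <;> fin_cases j <;> simp [Omg, Matrix.one_apply]

lemma sqrt3_gt_one : (1:ℝ) < Real.sqrt 3 := by
  nlinarith [sqrt3_sq, sqrt3_pos]

lemma expE_mulVec (t : ℝ) :
    (expE t).mulVec ![1, Real.sqrt 3 - 2]
      = Real.exp (t * (Real.sqrt 3 - 1)) • ![1, Real.sqrt 3 - 2] := by
  have h := sqrt3_sq
  have h0 := sqrt3_pos.ne'
  rw [expE_eq]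
  funext k
  fin_cases k <;>
    simp [Cmat1, Cmat2, E11, E22, Pmat, Pinv, Matrix.mulVec, Matrix.mul_apply,
      dotProduct, Fin.sum_univ_two, Matrix.add_apply, Matrix.smul_apply] <;>
    field_simp <;> ring_nf <;> nlinarith [h]

lemma Rmat_mulVec (t : ℝ) :
    (Rmat t).mulVec ![1, Real.sqrt 3 - 2]
      = Real.exp (t * (Real.sqrt 3 - 1)) • (Omg t).mulVec ![1, Real.sqrt 3 - 2] := by
  rw [Rmat, expM_eq, ← Matrix.mulVec_mulVec, expE_mulVec, Matrix.mulVec_smul]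

lemma opNorm_lower (t : ℝ) : Real.exp (t * (Real.sqrt 3 - 1)) ≤ opNorm (Rmat t) := by
  set v0 : Fin 2 → ℝ := ![1, Real.sqrt 3 - 2] with hv0
  set v : EuclideanSpace ℝ (Fin 2) := (WithLp.equiv 2 (Fin 2 → ℝ)).symm v0 with hv
  set L := LinearMap.toContinuousLinearMap (Matrix.toEuclideanLin (Rmat t)) with hL
  have hvpos : (0:ℝ) < ‖v‖ := by
    rw [norm_pos_iff]
    intro h0
    have h1 : v 0 = 0 := by rw [h0]; rfl
    have h2 : v 0 = 1 := rfl
    rw [h2] at h1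
    norm_num at h1
  have hLv : L v = (WithLp.equiv 2 (Fin 2 → ℝ)).symm
      (Real.exp (t * (Real.sqrt 3 - 1)) • (Omg t).mulVec v0) := by
    show Matrix.toEuclideanLin (Rmat t) v = _
    rw [hv, ← Rmat_mulVec]; rfl
  have hnorm : ‖L v‖ = Real.exp (t * (Real.sqrt 3 - 1)) * ‖v‖ := by
    rw [hLv]
    have : (WithLp.equiv 2 (Fin 2 → ℝ)).symm
        (Real.exp (t * (Real.sqrt 3 - 1)) • (Omg t).mulVec v0)
        = Real.exp (t * (Real.sqrt 3 - 1)) •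
          ((WithLp.equiv 2 (Fin 2 → ℝ)).symm ((Omg t).mulVec v0)) := rfl
    rw [this, norm_smul]
    congr 1
    · simp [Real.norm_eq_abs, abs_of_pos (Real.exp_pos _)]
    · rw [EuclideanSpace.norm_eq, EuclideanSpace.norm_eq]
      congr 1
      simp only [Fin.sum_univ_two]
      have e1 : ((WithLp.equiv 2 (Fin 2 → ℝ)).symm ((Omg t).mulVec v0)) 0
          = Real.cos t * 1 + (-Real.sin t) * (Real.sqrt 3 - 2) := by
        simp [Omg, v0, Matrix.mulVec, dotProduct, Fin.sum_univ_two]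
        ring
      have e2 : ((WithLp.equiv 2 (Fin 2 → ℝ)).symm ((Omg t).mulVec v0)) 1
          = Real.sin t * 1 + Real.cos t * (Real.sqrt 3 - 2) := by
        simp [Omg, v0, Matrix.mulVec, dotProduct, Fin.sum_univ_two]
        ring
      have f1 : v 0 = 1 := rfl
      have f2 : v 1 = Real.sqrt 3 - 2 := rfl
      rw [e1, e2, f1, f2]
      simp only [Real.norm_eq_abs, sq_abs]
      nlinarith [Real.sin_sq_add_cos_sq t]
  have hle := L.le_opNorm v
  rw [hnorm] at hle
  have : opNorm (Rmat t) = ‖L‖ := rfl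
  rw [this]
  exact le_of_mul_le_mul_right hle hvpos

lemma not_tendsto_zero : ¬ Tendsto (fun t => opNorm (Rmat t)) atTop (nhds 0) := by
  intro h
  have h1 : ∀ᶠ t in atTop, opNorm (Rmat t) < 1 := h (Iio_mem_nhds (by norm_num))
  obtain ⟨t, ht0, ht1⟩ := ((eventually_ge_atTop (0:ℝ)).and h1).exists
  have h2 : (1:ℝ) ≤ Real.exp (t * (Real.sqrt 3 - 1)) := by
    apply Real.one_le_exp
    have := sqrt3_gt_one
    nlinarith
  linarith [opNorm_lower t]

lemma not_bddAbove : ¬ BddAbove (Set.range fun t => opNorm (Rmat t)) := by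
  rintro ⟨C, hC⟩
  have hub : ∀ t : ℝ, opNorm (Rmat t) ≤ C := fun t => hC (Set.mem_range_self t)
  have hC1 : (0:ℝ) < C + 1 := by
    have := (opNorm_lower 0).trans (hub 0)
    have := Real.exp_pos (0 * (Real.sqrt 3 - 1))
    linarith
  set t := Real.log (C + 1) / (Real.sqrt 3 - 1) with ht
  have hne : Real.sqrt 3 - 1 ≠ 0 := by have := sqrt3_gt_one; linarith
  have : Real.exp (t * (Real.sqrt 3 - 1)) = C + 1 := by
    rw [ht, div_mul_cancel₀ _ hne, Real.exp_log hC1]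
  have := (opNorm_lower t).trans (hub t)
  linarith

lemma integral_cos2 (t : ℝ) : ∫ s in (0:ℝ)..t, Real.cos (2*s) = Real.sin (2*t) / 2 := by
  rw [intervalIntegral.integral_comp_mul_left (fun x => Real.cos x) (two_ne_zero)]
  simp [integral_cos]
  ring

lemma integral_sin2 (t : ℝ) : ∫ s in (0:ℝ)..t, Real.sin (2*s) = (1 - Real.cos (2*t)) / 2 := by
  rw [intervalIntegral.integral_comp_mul_left (fun x => Real.sin x) (two_ne_zero)]
  simp [integral_sin]
  ring

lemma tendsto_sin2_div : Tendsto (fun t : ℝ => Real.sin (2*t) * t⁻¹) atTop (nhds 0) := by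
  apply squeeze_zero_norm' (a := fun t : ℝ => t⁻¹) _ tendsto_inv_atTop_zero
  filter_upwards [eventually_ge_atTop (1:ℝ)] with t ht
  have ht0 : (0:ℝ) < t := by linarith
  rw [norm_mul, Real.norm_eq_abs, Real.norm_eq_abs, abs_inv, abs_of_pos ht0]
  calc |Real.sin (2*t)| * t⁻¹ ≤ 1 * t⁻¹ := by
        apply mul_le_mul_of_nonneg_right (Real.abs_sin_le_one _) (by positivity)
    _ = t⁻¹ := one_mul _

lemma tendsto_cos2_div : Tendsto (fun t : ℝ => (Real.cos (2*t) - 1) * t⁻¹) atTop (nhds 0) := by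
  apply squeeze_zero_norm' (a := fun t : ℝ => 2 * t⁻¹) _ (by
    simpa using tendsto_inv_atTop_zero.const_mul (2:ℝ))
  filter_upwards [eventually_ge_atTop (1:ℝ)] with t ht
  have ht0 : (0:ℝ) < t := by linarith
  rw [norm_mul, Real.norm_eq_abs, Real.norm_eq_abs, abs_inv, abs_of_pos ht0]
  have : |Real.cos (2*t) - 1| ≤ 2 := by
    have h1 := Real.neg_one_le_cos (2*t)
    have h2 := Real.cos_le_one (2*t)
    rw [abs_le]; constructor <;> linarith
  calc |Real.cos (2*t) - 1| * t⁻¹ ≤ 2 * t⁻¹ :=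
    mul_le_mul_of_nonneg_right this (by positivity)

lemma cesaro :
    Tendsto (fun t => Matrix.of fun i j => (1 / t) * ∫ s in (0:ℝ)..t, Amat s i j)
      atTop (nhds (1 : Matrix (Fin 2) (Fin 2) ℝ)) := by
  have hint : ∀ (t : ℝ) (i j : Fin 2), ∫ s in (0:ℝ)..t, Amat s i j =
      (!![t - Real.sin (2*t), Real.cos (2*t) - 1;
          Real.cos (2*t) - 1, t + Real.sin (2*t)] : Matrix (Fin 2) (Fin 2) ℝ) i j := by
    intro t i j
    have hcos : IntervalIntegrable (fun s => Real.cos (2*s)) volume 0 t :=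
      (Real.continuous_cos.comp (continuous_const.mul continuous_id)).intervalIntegrable 0 t
    have hsin : IntervalIntegrable (fun s => Real.sin (2*s)) volume 0 t :=
      (Real.continuous_sin.comp (continuous_const.mul continuous_id)).intervalIntegrable 0 t
    fin_cases i <;> fin_cases j <;> simp [Amat_eq]
    · rw [intervalIntegral.integral_sub intervalIntegrable_const (hcos.const_mul 2),
        intervalIntegral.integral_const_mul, integral_cos2]
      simp
      ring
    · rw [intervalIntegral.integral_add intervalIntegrable_const (hcos.const_mul 2),
        intervalIntegral.integral_const_mul, integral_cos2]
      simp
      ring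
  apply tendsto_pi_nhds.mpr
  intro i
  apply tendsto_pi_nhds.mpr
  intro j
  have hone : Tendsto (fun t : ℝ => 1 - Real.sin (2*t) * t⁻¹) atTop (nhds 1) := by
    simpa using tendsto_const_nhds.sub tendsto_sin2_div
  have hone' : Tendsto (fun t : ℝ => 1 + Real.sin (2*t) * t⁻¹) atTop (nhds 1) := by
    simpa using tendsto_const_nhds.add tendsto_sin2_div
  fin_cases i <;> fin_cases j <;>
    simp only [Matrix.of_apply] <;> simp only [hint] <;>
    simp [Matrix.one_apply]
  · apply hone.congr'
    filter_upwards [eventually_gt_atTop (0:ℝ)] with t ht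
    field_simp
  · apply tendsto_cos2_div.congr'
    filter_upwards [eventually_gt_atTop (0:ℝ)] with t ht
    ring
  · apply tendsto_cos2_div.congr'
    filter_upwards [eventually_gt_atTop (0:ℝ)] with t ht
    ring
  · apply hone'.congr'
    filter_upwards [eventually_gt_atTop (0:ℝ)] with t ht
    field_simp


theorem counterexample_cesaro :
    (∀ t, ∀ i j, HasDerivAt (fun u => Rmat u i j) ((-(Amat t * Rmat t)) i j) t) ∧
    Rmat 0 = 1 ∧
    ¬ Tendsto (fun t => opNorm (Rmat t)) atTop (nhds 0) ∧
    ¬ BddAbove (Set.range fun t => opNorm (Rmat t)) ∧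
    Tendsto (fun t => Matrix.of fun i j => (1 / t) * ∫ s in (0:ℝ)..t, Amat s i j)
      atTop (nhds (1 : Matrix (Fin 2) (Fin 2) ℝ)) :=
  ⟨Rmat_deriv, Rmat_zero, not_tendsto_zero, not_bddAbove, cesaro⟩
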